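/- Let F : I → I be an injective map of an interval such that I is partitioned into two subintervals I_0, I_1 on each of which F is continuous and monotone (e.g., an affine contraction). Define P^1 = {I_0, I_1} and P^{t+1} = { F^{-1}(A) ∩ B : A ∈ P^t, B ∈ P^1 } \ {∅}. Then #P^{t+1} ≤ #P^t + 1 for all t, and hence #P^t ≤ t + 1 for all t ≥ 1. -/
import Mathlib


/-- Dynamical partitions: `dynPartition F P t` is the paper's `P^{t+1}`
(so `dynPartition F P 0 = P = P^1 = {I_0, I_1}`). -/
def dynPartition {X : Type*} (F : X → X) (P : Set (Set X)) : ℕ → Set (Set X)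
  | 0 => P
  | (t + 1) => {S | ∃ I ∈ dynPartition F P t, ∃ J ∈ P,
      S = F ⁻¹' I ∩ J ∧ S ≠ ∅}

/-- let `F : I → I` be injective on an interval `I ⊆ ℝ` partitioned into
two subintervals `I_0, I_1`, on each of which `F` is continuous and monotone.  Then the
dynamical partitions `P^1 = {I_0, I_1}`, `P^{t+1} = {F⁻¹(A) ∩ B : A ∈ P^t, B ∈ P^1}∖{∅}`
satisfy `#P^{t+1} ≤ #P^t + 1`, and hence `#P^t ≤ t + 1` for all `t ≥ 1`. -/
theorem stmt_11 (I I₀ I₁ : Set ℝ)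
    (hI : I = I₀ ∪ I₁) (hdisj : Disjoint I₀ I₁)
    (hI₀ : ∃ a b : ℝ, I₀ = Set.Icc a b ∨ I₀ = Set.Ico a b ∨ I₀ = Set.Ioc a b ∨
      I₀ = Set.Ioo a b)
    (hI₁ : ∃ a b : ℝ, I₁ = Set.Icc a b ∨ I₁ = Set.Ico a b ∨ I₁ = Set.Ioc a b ∨
      I₁ = Set.Ioo a b)
    (F : ℝ → ℝ) (hmaps : Set.MapsTo F I I) (hinj : Set.InjOn F I)
    (hc0 : ContinuousOn F I₀) (hc1 : ContinuousOn F I₁)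
    (hm0 : MonotoneOn F I₀ ∨ AntitoneOn F I₀)
    (hm1 : MonotoneOn F I₁ ∨ AntitoneOn F I₁) :
    (∀ t : ℕ, (dynPartition F {I₀, I₁} (t + 1)).ncard ≤
        (dynPartition F {I₀, I₁} t).ncard + 1) ∧
    (∀ t : ℕ, 1 ≤ t → (dynPartition F {I₀, I₁} (t - 1)).ncard ≤ t + 1) := by
  classical
  -- separation of disjoint order-convex sets
  have sep : ∀ U V : Set ℝ, U.OrdConnected → V.OrdConnected → (∀ x, x ∈ U → x ∉ V) →
      (∀ u ∈ U, ∀ v ∈ V, u < v) ∨ (∀ u ∈ U, ∀ v ∈ V, v < u) := by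
    intro U V hU hV hdis
    by_contra h'
    push_neg at h'
    obtain ⟨⟨u, hu, v, hv, hvu⟩, u', hu', v', hv', hu'v'⟩ := h'
    rcases le_total u' v with h1 | h1
    · exact hdis v (hU.out hu' hu ⟨h1, hvu⟩) hv
    · exact hdis u' hu' (hV.out hv hv' ⟨h1, hu'v'⟩)
  set P : Set (Set ℝ) := {I₀, I₁} with hP
  set Q : ℕ → Set (Set ℝ) := dynPartition F P with hQdef
  have memQ : ∀ t S, S ∈ Q (t + 1) ↔ ∃ A ∈ Q t, ∃ J ∈ P, S = F ⁻¹' A ∩ J ∧ S ≠ ∅ :=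
    fun t S => Iff.rfl
  have hQ0 : Q 0 = P := rfl
  have hPmem : ∀ J, J ∈ P ↔ J = I₀ ∨ J = I₁ := by intro J; simp [hP]
  -- each element of P is an interval
  have hoc : ∀ J ∈ P, J.OrdConnected ∧ IsPreconnected J := by
    intro J hJ
    have : ∃ a b : ℝ, J = Set.Icc a b ∨ J = Set.Ico a b ∨ J = Set.Ioc a b ∨
        J = Set.Ioo a b := by
      rcases (hPmem J).1 hJ with rfl | rfl
      · exact hI₀
      · exact hI₁
    obtain ⟨a, b, h⟩ := this
    rcases h with rfl | rfl | rfl | rfl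
    · exact ⟨Set.ordConnected_Icc, isPreconnected_Icc⟩
    · exact ⟨Set.ordConnected_Ico, isPreconnected_Ico⟩
    · exact ⟨Set.ordConnected_Ioc, isPreconnected_Ioc⟩
    · exact ⟨Set.ordConnected_Ioo, isPreconnected_Ioo⟩
  have hcont : ∀ J ∈ P, ContinuousOn F J := by
    intro J hJ
    rcases (hPmem J).1 hJ with rfl | rfl
    · exact hc0
    · exact hc1
  have hmono : ∀ J ∈ P, MonotoneOn F J ∨ AntitoneOn F J := by
    intro J hJ
    rcases (hPmem J).1 hJ with rfl | rfl
    · exact hm0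
    · exact hm1
  -- images F(I₀), F(I₁) are intervals
  have hFim : ∀ J ∈ P, (F '' J).OrdConnected := by
    intro J hJ
    exact ((hoc J hJ).2.image F (hcont J hJ)).ordConnected
  -- images are disjoint
  have hFdis : ∀ y, y ∈ F '' I₀ → y ∉ F '' I₁ := by
    rintro y ⟨x₀, hx₀, rfl⟩ ⟨x₁, hx₁, he⟩
    have hx₀I : x₀ ∈ I := by rw [hI]; exact Set.mem_union_left _ hx₀
    have hx₁I : x₁ ∈ I := by rw [hI]; exact Set.mem_union_right _ hx₁
    have : x₁ = x₀ := hinj hx₁I hx₀I he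
    exact Set.disjoint_left.mp hdisj hx₀ (this ▸ hx₁)
  -- distinct pieces of the base partition are disjoint
  have hJdis : ∀ J ∈ P, ∀ J' ∈ P, ∀ x : ℝ, x ∈ J → x ∈ J' → J = J' := by
    intro J hJ J' hJ' x hx hx'
    rcases (hPmem J).1 hJ with rfl | rfl <;> rcases (hPmem J').1 hJ' with rfl | rfl
    · rfl
    · exact absurd hx' (Set.disjoint_left.mp hdisj hx)
    · exact absurd hx (Set.disjoint_left.mp hdisj hx')
    · rfl
  -- convexity is preserved
  have conv_step : ∀ A J : Set ℝ, A.OrdConnected → J ∈ P →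
      (F ⁻¹' A ∩ J).OrdConnected := by
    intro A J hA hJ
    have hJoc := (hoc J hJ).1
    constructor
    intro x hx y hy z hz
    have hzJ : z ∈ J := hJoc.out hx.2 hy.2 hz
    refine ⟨?_, hzJ⟩
    rcases hmono J hJ with hm | hm
    · exact hA.out hx.1 hy.1 ⟨hm hx.2 hzJ hz.1, hm hzJ hy.2 hz.2⟩
    · exact hA.out hy.1 hx.1 ⟨hm hzJ hy.2 hz.2, hm hx.2 hzJ hz.1⟩
  -- main invariant
  have inv : ∀ t, (Q t).Finite ∧ (∀ S ∈ Q t, S.OrdConnected) ∧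
      (∀ S ∈ Q t, ∀ S' ∈ Q t, ∀ x : ℝ, x ∈ S → x ∈ S' → S = S') := by
    intro t
    induction t with
    | zero =>
      refine ⟨?_, fun S hS => (hoc S hS).1, hJdis⟩
      rw [hQ0, hP]
      exact (Set.finite_singleton I₁).insert I₀
    | succ t ih =>
      obtain ⟨hfin, hocQ, hdisQ⟩ := ih
      refine ⟨?_, ?_, ?_⟩
      · apply Set.Finite.subset ((hfin.image fun A => F ⁻¹' A ∩ I₀).union
          (hfin.image fun A => F ⁻¹' A ∩ I₁))
        intro S hS
        obtain ⟨A, hA, J, hJ, hSeq, hne⟩ := (memQ t S).1 hS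
        rcases (hPmem J).1 hJ with rfl | rfl
        · exact Or.inl ⟨A, hA, hSeq.symm⟩
        · exact Or.inr ⟨A, hA, hSeq.symm⟩
      · intro S hS
        obtain ⟨A, hA, J, hJ, hSeq, hne⟩ := (memQ t S).1 hS
        rw [hSeq]
        exact conv_step A J (hocQ A hA) hJ
      · intro S hS S' hS' x hx hx'
        obtain ⟨A, hA, J, hJ, hSeq, hne⟩ := (memQ t S).1 hS
        obtain ⟨A', hA', J', hJ', hSeq', hne'⟩ := (memQ t S').1 hS'
        rw [hSeq] at hx; rw [hSeq'] at hx'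
        have hAA : A = A' := hdisQ A hA A' hA' (F x) hx.1 hx'.1
        have hJJ : J = J' := hJdis J hJ J' hJ' x hx.2 hx'.2
        rw [hSeq, hSeq', hAA, hJJ]
  -- the counting step
  have step : ∀ t, (Q (t + 1)).ncard ≤ (Q t).ncard + 1 := by
    intro t
    obtain ⟨hfin, hocQ, hdisQ⟩ := inv t
    -- at most one element splits
    have huniq : ∀ A ∈ Q t, ∀ A' ∈ Q t,
        (F ⁻¹' A ∩ I₀).Nonempty → (F ⁻¹' A ∩ I₁).Nonempty →
        (F ⁻¹' A' ∩ I₀).Nonempty → (F ⁻¹' A' ∩ I₁).Nonempty → A = A' := by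
      intro A hA A' hA' ⟨x₀, hx₀⟩ ⟨x₁, hx₁⟩ ⟨y₀, hy₀⟩ ⟨y₁, hy₁⟩
      by_contra hne
      have hdisAA : ∀ x, x ∈ A → x ∉ A' := by
        intro x hx hx'
        exact hne (hdisQ A hA A' hA' x hx hx')
      have hsepF := sep (F '' I₀) (F '' I₁) (hFim I₀ (by simp [hP]))
        (hFim I₁ (by simp [hP])) hFdis
      have hsepA := sep A A' (hocQ A hA) (hocQ A' hA') hdisAA
      have hFx₀ : F x₀ ∈ F '' I₀ := Set.mem_image_of_mem F hx₀.2
      have hFx₁ : F x₁ ∈ F '' I₁ := Set.mem_image_of_mem F hx₁.2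
      have hFy₀ : F y₀ ∈ F '' I₀ := Set.mem_image_of_mem F hy₀.2
      have hFy₁ : F y₁ ∈ F '' I₁ := Set.mem_image_of_mem F hy₁.2
      rcases hsepF with hF | hF <;> rcases hsepA with hA2 | hA2
      · exact absurd (hF _ hFy₀ _ hFx₁) (asymm (hA2 _ hx₁.1 _ hy₀.1))
      · exact absurd (hF _ hFx₀ _ hFy₁) (asymm (hA2 _ hx₀.1 _ hy₁.1))
      · exact absurd (hF _ hFx₀ _ hFy₁) (asymm (hA2 _ hx₀.1 _ hy₁.1))
      · exact absurd (hF _ hFy₀ _ hFx₁) (asymm (hA2 _ hx₁.1 _ hy₀.1))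
    set h : Set ℝ → Set ℝ := fun A => if F ⁻¹' A ∩ I₀ = ∅ then F ⁻¹' A ∩ I₁
      else F ⁻¹' A ∩ I₀ with hh
    by_cases hsplit : ∃ A ∈ Q t, (F ⁻¹' A ∩ I₀) ≠ ∅ ∧ (F ⁻¹' A ∩ I₁) ≠ ∅
    · obtain ⟨A₀, hA₀, hA₀0, hA₀1⟩ := hsplit
      have hsub : Q (t + 1) ⊆ insert (F ⁻¹' A₀ ∩ I₁) (h '' Q t) := by
        intro S hS
        obtain ⟨A, hA, J, hJ, hSeq, hne⟩ := (memQ t S).1 hS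
        rcases (hPmem J).1 hJ with rfl | rfl
        · refine Or.inr ⟨A, hA, ?_⟩
          rw [hh]; simp only
          rw [if_neg (hSeq ▸ hne), hSeq]
        · by_cases h0 : F ⁻¹' A ∩ I₀ = ∅
          · refine Or.inr ⟨A, hA, ?_⟩
            rw [hh]; simp only
            rw [if_pos h0, hSeq]
          · have : A = A₀ := huniq A hA A₀ hA₀
              (Set.nonempty_iff_ne_empty.2 h0) (Set.nonempty_iff_ne_empty.2 (hSeq ▸ hne))
              (Set.nonempty_iff_ne_empty.2 hA₀0) (Set.nonempty_iff_ne_empty.2 hA₀1)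
            exact Or.inl (by rw [hSeq, this])
      calc (Q (t + 1)).ncard ≤ (insert (F ⁻¹' A₀ ∩ I₁) (h '' Q t)).ncard :=
            Set.ncard_le_ncard hsub ((hfin.image h).insert _)
        _ ≤ (h '' Q t).ncard + 1 := Set.ncard_insert_le _ _
        _ ≤ (Q t).ncard + 1 := by
            exact Nat.add_le_add_right (Set.ncard_image_le hfin) 1
    · push_neg at hsplit
      have hsub : Q (t + 1) ⊆ h '' Q t := by
        intro S hS
        obtain ⟨A, hA, J, hJ, hSeq, hne⟩ := (memQ t S).1 hS
        rcases (hPmem J).1 hJ with rfl | rfl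
        · refine ⟨A, hA, ?_⟩
          rw [hh]; simp only
          rw [if_neg (hSeq ▸ hne), hSeq]
        · refine ⟨A, hA, ?_⟩
          have h0 : F ⁻¹' A ∩ I₀ = ∅ := by
            by_contra h0
            exact (hSeq ▸ hne) (hsplit A hA (Set.nonempty_iff_ne_empty.2 h0))
          rw [hh]; simp only
          rw [if_pos h0, hSeq]
      calc (Q (t + 1)).ncard ≤ (h '' Q t).ncard :=
            Set.ncard_le_ncard hsub (hfin.image h)
        _ ≤ (Q t).ncard := Set.ncard_image_le hfin
        _ ≤ (Q t).ncard + 1 := Nat.le_succ _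
  refine ⟨step, ?_⟩
  have bound : ∀ t : ℕ, (Q t).ncard ≤ t + 2 := by
    intro t
    induction t with
    | zero =>
      have : (Q 0).ncard ≤ ({I₁} : Set (Set ℝ)).ncard + 1 := by
        rw [hQ0, hP]; exact Set.ncard_insert_le _ _
      simpa [Set.ncard_singleton] using this
    | succ t ih =>
      have := step t
      omega
  intro t ht
  have := bound (t - 1)
  omega
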